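/- Let (Ω, S) be a {1,k}-valenced association scheme, and let x, y, z ∈ S_k and r ∈ x*z, s ∈ z*y form an initial configuration (x ∼ z ∼ y). If z is a loop of the graph 𝔛 (i.e., z ∼ z) and (xx*·yy*) ∩ zz* = {1}, then r and s are linked with respect to (x,y,z). -/

import Mathlib

open Finset

abbrev BRel (Ω : Type*) := Finset (Ω × Ω)

variable {Ω : Type*} [Fintype Ω] [DecidableEq Ω]

/-- The diagonal relation `1_Ω`. -/
def diagRel (Ω : Type*) [Fintype Ω] [DecidableEq Ω] : BRel Ω :=
  Finset.univ.filter (fun p => p.1 = p.2)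

/-- The converse relation `r*`. -/
def convRel (r : BRel Ω) : BRel Ω := r.image Prod.swap

/-- Relational composition `a ∘ b`. -/
def compBRel (a b : BRel Ω) : BRel Ω :=
  Finset.univ.filter (fun p => ∃ γ, (p.1, γ) ∈ a ∧ (γ, p.2) ∈ b)

/-- An association scheme on a finite set `Ω`: a partition `S` of `Ω × Ω` into nonempty
basis relations, containing the diagonal, closed under converse, with well-defined
intersection numbers `c r s t`. -/
structure AssocScheme (Ω : Type*) [Fintype Ω] [DecidableEq Ω] where
  S : Finset (BRel Ω)
  nonempty : ∀ s ∈ S, s.Nonempty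
  partition : ∀ p : Ω × Ω, ∃! s, s ∈ S ∧ p ∈ s
  diag_mem : diagRel Ω ∈ S
  conv_mem : ∀ s ∈ S, convRel s ∈ S
  c : BRel Ω → BRel Ω → BRel Ω → ℕ
  c_spec : ∀ r ∈ S, ∀ s ∈ S, ∀ t ∈ S, ∀ p ∈ t,
    (Finset.univ.filter (fun γ => (p.1, γ) ∈ r ∧ (γ, p.2) ∈ s)).card = c r s t

namespace AssocScheme

variable (X : AssocScheme Ω)

/-- The valency `n_s = c_{s,s*}^{1}`. -/
def n (s : BRel Ω) : ℕ := X.c s (convRel s) (diagRel Ω)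

/-- The complex product `rs` of two basis relations: all `t ∈ S` with `c_{r,s}^t ≠ 0`. -/
def cp (r s : BRel Ω) : Finset (BRel Ω) := X.S.filter (fun t => X.c r s t ≠ 0)

/-- The complex product of two sets of basis relations. -/
def cpS (A B : Finset (BRel Ω)) : Finset (BRel Ω) :=
  A.biUnion fun a => B.biUnion fun b => X.cp a b

/-- `S_k`: the basis relations of valency `k`. -/
def Sk (k : ℕ) : Finset (BRel Ω) := X.S.filter (fun s => X.n s = k)

/-- `x ∼ y`: every `s` in the complex product `x*y` satisfies `c_{x,s}^y = 1`. -/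
def adj (x y : BRel Ω) : Prop := ∀ s ∈ X.cp (convRel x) y, X.c x s y = 1

/-- `r(α,β)`: the unique basis relation containing `(α,β)`. -/
noncomputable def rel (α β : Ω) : BRel Ω := (X.partition (α, β)).choose

/-- The indistinguishing number `c(s) = Σ_t c_{t,t*}^s`. -/
def ind (s : BRel Ω) : ℕ := ∑ t ∈ X.S, X.c t (convRel t) s

/-- `k`-saturated: every at most four element subset of `S_k` has a common neighbor. -/
def kSaturated (k : ℕ) : Prop :=
  ∀ T ⊆ X.Sk k, T.card ≤ 4 → ∃ y ∈ X.Sk k, ∀ x ∈ T, X.adj y x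

/-- `r ∈ x*z` and `s ∈ z*y` are linked with respect to `(x,y,z)`, with witness `t`. -/
def linked (k : ℕ) (x y z r s t : BRel Ω) : Prop :=
  ∃ q ∈ X.Sk k, X.adj q x ∧ X.adj q y ∧ X.adj q z ∧
    ∃ u ∈ X.cp (convRel x) q, ∃ v ∈ X.cp (convRel y) q, ∃ w ∈ X.cp (convRel z) q,
      t ∈ X.cp r s ∧
      X.cp (convRel x) z ∩ X.cp u (convRel w) = {r} ∧
      X.cp (convRel z) y ∩ X.cp w (convRel v) = {s} ∧
      X.cp (convRel x) y ∩ X.cp u (convRel v) = {t}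

/-- Desarguesian with respect to `S_k`. -/
def Desarguesian (k : ℕ) : Prop :=
  ∀ x ∈ X.Sk k, ∀ y ∈ X.Sk k, ∀ z ∈ X.Sk k, X.adj x z → X.adj z y →
    ∀ r ∈ X.cp (convRel x) z, ∀ s ∈ X.cp (convRel z) y, ∃ t, X.linked k x y z r s t

end AssocScheme

/-- `αr = {β : (α,β) ∈ r}`. -/
def relImage (r : BRel Ω) (α : Ω) : Finset Ω := (r.filter (fun p => p.1 = α)).image Prod.snd

/-- The restriction `r_{x,y} = r ∩ (αx × αy)`. -/
def restrictRel (α : Ω) (r x y : BRel Ω) : BRel Ω :=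
  r.filter (fun p => p.1 ∈ relImage x α ∧ p.2 ∈ relImage y α)


/-- An algebraic isomorphism: a bijection between the sets of basis relations
preserving all intersection numbers. -/
def AlgIso {Ω Ω' : Type*} [Fintype Ω] [DecidableEq Ω] [Fintype Ω'] [DecidableEq Ω']
    (X : AssocScheme Ω) (X' : AssocScheme Ω') (φ : BRel Ω → BRel Ω') : Prop :=
  Set.BijOn φ ↑X.S ↑X'.S ∧
    ∀ r ∈ X.S, ∀ s ∈ X.S, ∀ t ∈ X.S, X.c r s t = X'.c (φ r) (φ s) (φ t)

/-- A `φ`-faithful map with domain `D`. -/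
def Faithful {Ω Ω' : Type*} [Fintype Ω] [DecidableEq Ω] [Fintype Ω'] [DecidableEq Ω']
    (X : AssocScheme Ω) (X' : AssocScheme Ω') (φ : BRel Ω → BRel Ω')
    (D : Finset Ω) (f : Ω → Ω') : Prop :=
  Set.InjOn f ↑D ∧ ∀ a ∈ D, ∀ b ∈ D, φ (X.rel a b) = X'.rel (f a) (f b)

/-- `f` is `φ`-extendable to the point `γ`. -/
def ExtendableAt {Ω Ω' : Type*} [Fintype Ω] [DecidableEq Ω] [Fintype Ω'] [DecidableEq Ω']
    (X : AssocScheme Ω) (X' : AssocScheme Ω') (φ : BRel Ω → BRel Ω')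
    (D : Finset Ω) (f : Ω → Ω') (γ : Ω) : Prop :=
  ∃ g : Ω → Ω', (∀ a ∈ D, g a = f a) ∧ Faithful X X' φ (insert γ D) g


section Helpers

variable {Ω : Type*} [Fintype Ω] [DecidableEq Ω]

lemma mem_convRel {r : BRel Ω} {a b : Ω} : (a, b) ∈ convRel r ↔ (b, a) ∈ r := by
  constructor
  · intro h
    obtain ⟨p, hp, hpe⟩ := Finset.mem_image.mp h
    obtain ⟨rfl, rfl⟩ : p.2 = a ∧ p.1 = b := by
      have := congrArg Prod.fst hpe; have := congrArg Prod.snd hpe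
      simp [Prod.swap] at *; tauto
    simpa using hp
  · intro h
    exact Finset.mem_image.mpr ⟨(b, a), h, rfl⟩

lemma convRel_convRel (r : BRel Ω) : convRel (convRel r) = r := by
  ext ⟨a, b⟩; simp [mem_convRel]

lemma convRel_diag : convRel (diagRel Ω) = diagRel Ω := by
  ext ⟨a, b⟩; simp [mem_convRel, diagRel, eq_comm]

lemma mem_diagRel {a b : Ω} : (a, b) ∈ diagRel Ω ↔ a = b := by
  simp [diagRel]

lemma card_convRel (r : BRel Ω) : (convRel r).card = r.card :=
  Finset.card_image_of_injective r Prod.swap_injective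

namespace AssocScheme

variable (X : AssocScheme Ω)

lemma rel_mem_S (α β : Ω) : X.rel α β ∈ X.S := (X.partition (α, β)).choose_spec.1.1

lemma mem_rel (α β : Ω) : (α, β) ∈ X.rel α β := (X.partition (α, β)).choose_spec.1.2

lemma eq_rel {t : BRel Ω} (ht : t ∈ X.S) {α β : Ω} (h : (α, β) ∈ t) : t = X.rel α β :=
  (X.partition (α, β)).choose_spec.2 t ⟨ht, h⟩

lemma eq_of_mem_mem {t t' : BRel Ω} (ht : t ∈ X.S) (ht' : t' ∈ X.S) {α β : Ω}
    (h : (α, β) ∈ t) (h' : (α, β) ∈ t') : t = t' := by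
  rw [X.eq_rel ht h, X.eq_rel ht' h']

lemma cval {r s t : BRel Ω} (hr : r ∈ X.S) (hs : s ∈ X.S) (ht : t ∈ X.S)
    {α β : Ω} (hp : (α, β) ∈ t) :
    (Finset.univ.filter (fun γ => (α, γ) ∈ r ∧ (γ, β) ∈ s)).card = X.c r s t :=
  X.c_spec r hr s hs t ht (α, β) hp

lemma exists_mid {r s t : BRel Ω} (hr : r ∈ X.S) (hs : s ∈ X.S) (ht : t ∈ X.S)
    {α β : Ω} (hp : (α, β) ∈ t) (hc : X.c r s t ≠ 0) :
    ∃ γ, (α, γ) ∈ r ∧ (γ, β) ∈ s := by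
  have h := X.cval hr hs ht hp
  have : (Finset.univ.filter (fun γ => (α, γ) ∈ r ∧ (γ, β) ∈ s)).Nonempty := by
    rw [← Finset.card_pos, h]; omega
  obtain ⟨γ, hγ⟩ := this
  exact ⟨γ, (Finset.mem_filter.mp hγ).2⟩

lemma unique_mid {r s t : BRel Ω} (hr : r ∈ X.S) (hs : s ∈ X.S) (ht : t ∈ X.S)
    {α β : Ω} (hp : (α, β) ∈ t) (hc : X.c r s t = 1) {γ γ' : Ω}
    (h1 : (α, γ) ∈ r ∧ (γ, β) ∈ s) (h2 : (α, γ') ∈ r ∧ (γ', β) ∈ s) : γ = γ' := by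
  have h := X.cval hr hs ht hp
  rw [hc] at h
  have hmem : γ ∈ Finset.univ.filter (fun γ => (α, γ) ∈ r ∧ (γ, β) ∈ s) := by
    simp [h1.1, h1.2]
  have hmem' : γ' ∈ Finset.univ.filter (fun γ => (α, γ) ∈ r ∧ (γ, β) ∈ s) := by
    simp [h2.1, h2.2]
  exact Finset.card_le_one.mp (le_of_eq h) _ hmem _ hmem'

lemma c_ne_zero {r s : BRel Ω} (hr : r ∈ X.S) (hs : s ∈ X.S) {α β γ : Ω}
    (h1 : (α, γ) ∈ r) (h2 : (γ, β) ∈ s) (h3 : (α, β) ∈ X.rel α β) :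
    X.c r s (X.rel α β) ≠ 0 := by
  have h := X.cval hr hs (X.rel_mem_S α β) h3
  rw [← h]
  have : γ ∈ Finset.univ.filter (fun γ => (α, γ) ∈ r ∧ (γ, β) ∈ s) := by simp [h1, h2]
  have := Finset.card_pos.mpr ⟨γ, this⟩
  omega

lemma mem_cp_of_triangle {r s : BRel Ω} (hr : r ∈ X.S) (hs : s ∈ X.S) {α β γ : Ω}
    (h1 : (α, γ) ∈ r) (h2 : (γ, β) ∈ s) :
    X.rel α β ∈ X.cp r s :=
  Finset.mem_filter.mpr ⟨X.rel_mem_S α β, X.c_ne_zero hr hs h1 h2 (X.mem_rel α β)⟩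

lemma slice_card {t : BRel Ω} (ht : t ∈ X.S) (α : Ω) :
    (Finset.univ.filter (fun γ => (α, γ) ∈ t)).card = X.n t := by
  have h := X.cval ht (X.conv_mem t ht) X.diag_mem (α := α) (β := α)
    (by simp [mem_diagRel])
  rw [show X.n t = X.c t (convRel t) (diagRel Ω) from rfl, ← h]
  congr 1
  ext γ
  simp [mem_convRel]

lemma exists_succ {t : BRel Ω} (ht : t ∈ X.S) (hn : 0 < X.n t) (α : Ω) :
    ∃ γ, (α, γ) ∈ t := by
  have h := X.slice_card ht α
  have : (Finset.univ.filter (fun γ => (α, γ) ∈ t)).Nonempty := by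
    rw [← Finset.card_pos, h]; omega
  obtain ⟨γ, hγ⟩ := this
  exact ⟨γ, (Finset.mem_filter.mp hγ).2⟩

lemma n_pos {t : BRel Ω} (ht : t ∈ X.S) : 0 < X.n t := by
  obtain ⟨⟨α, β⟩, hp⟩ := X.nonempty t ht
  have h := X.slice_card ht α
  have : β ∈ Finset.univ.filter (fun γ => (α, γ) ∈ t) := by simp [hp]
  have := Finset.card_pos.mpr ⟨β, this⟩
  omega

end AssocScheme

lemma AssocScheme.cardΩ_pos (X : AssocScheme Ω) : 0 < Fintype.card Ω := by
  obtain ⟨p, _⟩ := X.nonempty _ X.diag_mem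
  exact Fintype.card_pos_iff.mpr ⟨p.1⟩

namespace AssocScheme

variable (X : AssocScheme Ω)

lemma card_rel {t : BRel Ω} (ht : t ∈ X.S) : t.card = Fintype.card Ω * X.n t := by
  rw [Finset.card_eq_sum_card_fiberwise (f := Prod.fst) (t := Finset.univ)
    (fun p _ => Finset.mem_univ _)]
  have h : ∀ α ∈ (Finset.univ : Finset Ω),
      (t.filter (fun p => p.1 = α)).card = X.n t := by
    intro α _
    rw [← X.slice_card ht α]
    have he : t.filter (fun p => p.1 = α)
        = (Finset.univ.filter (fun γ => (α, γ) ∈ t)).image (fun γ => (α, γ)) := by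
      ext ⟨a, b⟩
      simp only [Finset.mem_filter, Finset.mem_image, Finset.mem_univ, true_and]
      constructor
      · rintro ⟨hab, rfl⟩; exact ⟨b, hab, rfl⟩
      · rintro ⟨γ, hγ, he⟩
        have h1 : α = a := congrArg Prod.fst he
        have h2 : γ = b := congrArg Prod.snd he
        subst h1; subst h2; exact ⟨hγ, rfl⟩
    rw [he, Finset.card_image_of_injective _ (fun a b h => by simpa using h)]
  rw [Finset.sum_congr rfl h, Finset.sum_const, Finset.card_univ, smul_eq_mul]

lemma n_convRel {t : BRel Ω} (ht : t ∈ X.S) : X.n (convRel t) = X.n t := by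
  have h1 := X.card_rel ht
  have h2 := X.card_rel (X.conv_mem t ht)
  rw [card_convRel, h1] at h2
  exact (Nat.eq_of_mul_eq_mul_left X.cardΩ_pos h2.symm)

end AssocScheme

/-- triangles -/
def TriSet (r s t : BRel Ω) : Finset (Ω × Ω × Ω) :=
  Finset.univ.filter (fun q => (q.1, q.2.1) ∈ r ∧ (q.2.1, q.2.2) ∈ s ∧ (q.1, q.2.2) ∈ t)

namespace AssocScheme

variable (X : AssocScheme Ω)

lemma TriSet_card {r s t : BRel Ω} (hr : r ∈ X.S) (hs : s ∈ X.S) (ht : t ∈ X.S) :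
    (TriSet r s t).card = X.c r s t * t.card := by
  rw [Finset.card_eq_sum_card_fiberwise (f := fun q => (q.1, q.2.2)) (t := t)
    (fun q hq => ((Finset.mem_filter.mp hq).2).2.2)]
  have h : ∀ p ∈ t, ((TriSet r s t).filter (fun q => (q.1, q.2.2) = p)).card = X.c r s t := by
    intro p hp
    rw [← X.cval hr hs ht (α := p.1) (β := p.2) (by simpa using hp)]
    have he : (TriSet r s t).filter (fun q => (q.1, q.2.2) = p)
        = (Finset.univ.filter (fun γ => (p.1, γ) ∈ r ∧ (γ, p.2) ∈ s)).image
            (fun γ => (p.1, γ, p.2)) := by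
      ext ⟨a, g, b⟩
      simp only [TriSet, Finset.mem_filter, Finset.mem_image, Finset.mem_univ, true_and]
      constructor
      · rintro ⟨⟨h1, h2, h3⟩, rfl⟩
        exact ⟨g, ⟨h1, h2⟩, rfl⟩
      · rintro ⟨γ, ⟨h1, h2⟩, he⟩
        obtain ⟨rfl, rfl, rfl⟩ : p.1 = a ∧ γ = g ∧ p.2 = b := by
          refine ⟨congrArg Prod.fst he, ?_, ?_⟩
          · have := congrArg (fun q => q.2.1) he; simpa using this
          · have := congrArg (fun q => q.2.2) he; simpa using this
        refine ⟨⟨h1, h2, ?_⟩, rfl⟩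
        simpa using hp
    rw [he, Finset.card_image_of_injective]
    intro a b h
    have := congrArg (fun q : Ω × Ω × Ω => q.2.1) h
    simpa using this
  rw [Finset.sum_congr rfl h, Finset.sum_const, smul_eq_mul, mul_comm]

end AssocScheme

lemma TriSet_shuffle1 (r s t : BRel Ω) :
    (TriSet r s t).card = (TriSet t (convRel s) r).card := by
  apply Finset.card_nbij' (i := fun q => (q.1, q.2.2, q.2.1)) (j := fun q => (q.1, q.2.2, q.2.1))
  · intro q hq
    simp only [TriSet, Finset.mem_coe, Finset.mem_filter, Finset.mem_univ, true_and] at hq ⊢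
    exact ⟨hq.2.2, mem_convRel.mpr hq.2.1, hq.1⟩
  · intro q hq
    simp only [TriSet, Finset.mem_coe, Finset.mem_filter, Finset.mem_univ, true_and] at hq ⊢
    exact ⟨hq.2.2, mem_convRel.mp hq.2.1, hq.1⟩
  · intro q _; rfl
  · intro q _; rfl

lemma TriSet_shuffle2 (r s t : BRel Ω) :
    (TriSet r s t).card = (TriSet (convRel s) (convRel r) (convRel t)).card := by
  apply Finset.card_nbij' (i := fun q => (q.2.2, q.2.1, q.1)) (j := fun q => (q.2.2, q.2.1, q.1))
  · intro q hq
    simp only [TriSet, Finset.mem_coe, Finset.mem_filter, Finset.mem_univ, true_and] at hq ⊢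
    exact ⟨mem_convRel.mpr hq.2.1, mem_convRel.mpr hq.1, mem_convRel.mpr hq.2.2⟩
  · intro q hq
    simp only [TriSet, Finset.mem_coe, Finset.mem_filter, Finset.mem_univ, true_and] at hq ⊢
    exact ⟨mem_convRel.mp hq.2.1, mem_convRel.mp hq.1, mem_convRel.mp hq.2.2⟩
  · intro q _; rfl
  · intro q _; rfl

lemma TriSet_shuffle3 (r s t : BRel Ω) :
    (TriSet r s t).card = (TriSet (convRel r) t s).card := by
  apply Finset.card_nbij' (i := fun q => (q.2.1, q.1, q.2.2)) (j := fun q => (q.2.1, q.1, q.2.2))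
  · intro q hq
    simp only [TriSet, Finset.mem_coe, Finset.mem_filter, Finset.mem_univ, true_and] at hq ⊢
    exact ⟨mem_convRel.mpr hq.1, hq.2.2, hq.2.1⟩
  · intro q hq
    simp only [TriSet, Finset.mem_coe, Finset.mem_filter, Finset.mem_univ, true_and] at hq ⊢
    exact ⟨mem_convRel.mp hq.1, hq.2.2, hq.2.1⟩
  · intro q _; rfl
  · intro q _; rfl

namespace AssocScheme

variable (X : AssocScheme Ω)

lemma cid1 {r s t : BRel Ω} (hr : r ∈ X.S) (hs : s ∈ X.S) (ht : t ∈ X.S) :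
    X.c r s t * X.n t = X.c t (convRel s) r * X.n r := by
  have h := TriSet_shuffle1 r s t
  rw [X.TriSet_card hr hs ht, X.TriSet_card ht (X.conv_mem s hs) hr] at h
  rw [X.card_rel ht, X.card_rel hr] at h
  apply Nat.eq_of_mul_eq_mul_left X.cardΩ_pos
  calc Fintype.card Ω * (X.c r s t * X.n t) = X.c r s t * (Fintype.card Ω * X.n t) := by ring
  _ = X.c t (convRel s) r * (Fintype.card Ω * X.n r) := h
  _ = _ := by ring

lemma cid2 {r s t : BRel Ω} (hr : r ∈ X.S) (hs : s ∈ X.S) (ht : t ∈ X.S) :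
    X.c r s t = X.c (convRel s) (convRel r) (convRel t) := by
  have h := TriSet_shuffle2 r s t
  rw [X.TriSet_card hr hs ht,
    X.TriSet_card (X.conv_mem s hs) (X.conv_mem r hr) (X.conv_mem t ht), card_convRel] at h
  have hpos : 0 < t.card := by
    rw [X.card_rel ht]
    exact Nat.mul_pos X.cardΩ_pos (X.n_pos ht)
  exact Nat.eq_of_mul_eq_mul_right hpos h

lemma cid3 {r s t : BRel Ω} (hr : r ∈ X.S) (hs : s ∈ X.S) (ht : t ∈ X.S) :
    X.c r s t * X.n t = X.c (convRel r) t s * X.n s := by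
  have h := TriSet_shuffle3 r s t
  rw [X.TriSet_card hr hs ht, X.TriSet_card (X.conv_mem r hr) ht hs] at h
  rw [X.card_rel ht, X.card_rel hs] at h
  apply Nat.eq_of_mul_eq_mul_left X.cardΩ_pos
  calc Fintype.card Ω * (X.c r s t * X.n t) = X.c r s t * (Fintype.card Ω * X.n t) := by ring
  _ = X.c (convRel r) t s * (Fintype.card Ω * X.n s) := h
  _ = _ := by ring

end AssocScheme

end Helpers


section Main

variable {Ω : Type*} [Fintype Ω] [DecidableEq Ω]

namespace AssocScheme

lemma thin_all_x (X : AssocScheme Ω) {k : ℕ} {x y t : BRel Ω}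
    (xS : x ∈ X.S) (yS : y ∈ X.S) (tS : t ∈ X.S)
    (nx : X.n x = k) (ny : X.n y = k) (hnt : X.n t = 1)
    (hcx : X.c (convRel x) y t ≠ 0) {π β : Ω} (hπβ : (π, β) ∈ t) :
    ∀ e, (e, π) ∈ x → (e, β) ∈ y := by
  have h := X.cid3 (X.conv_mem x xS) yS tS
  rw [convRel_convRel, hnt, mul_one, ny] at h
  -- h : X.c (convRel x) y t = X.c x t y * k
  have hsub : Finset.univ.filter (fun γ => (π, γ) ∈ convRel x ∧ (γ, β) ∈ y)
      ⊆ Finset.univ.filter (fun γ => (π, γ) ∈ convRel x) := by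
    intro γ hγ
    simp only [Finset.mem_filter] at hγ ⊢
    exact ⟨hγ.1, hγ.2.1⟩
  have hc1 := X.cval (X.conv_mem x xS) yS tS hπβ
  have hc2 := X.slice_card (X.conv_mem x xS) π
  have hnxc : X.n (convRel x) = k := by rw [X.n_convRel xS, nx]
  have hle : X.c (convRel x) y t ≤ k := by
    have := Finset.card_le_card hsub
    rwa [hc1, hc2, hnxc] at this
  have hge : 1 ≤ X.c x t y := by
    rcases Nat.eq_zero_or_pos (X.c x t y) with h0 | h0
    · rw [h0, zero_mul] at h; exact absurd h hcx
    · omega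
  have hck : X.c (convRel x) y t = k := by
    have h2 : 1 * k ≤ X.c x t y * k := Nat.mul_le_mul_right k hge
    omega
  have heq := Finset.eq_of_subset_of_card_le hsub (by rw [hc1, hc2, hnxc, hck])
  intro e he
  have hmem : e ∈ Finset.univ.filter (fun γ => (π, γ) ∈ convRel x) := by
    simp only [Finset.mem_filter, Finset.mem_univ, true_and]
    exact mem_convRel.mpr he
  rw [← heq] at hmem
  exact (Finset.mem_filter.mp hmem).2.2

lemma thin_all_r (X : AssocScheme Ω) {r s t : BRel Ω}
    (rS : r ∈ X.S) (sS : s ∈ X.S) (tS : t ∈ X.S)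
    (hnt : X.n t = 1) (hcrs : X.c r s t ≠ 0) {π β : Ω} (hπβ : (π, β) ∈ t) :
    ∀ a, (π, a) ∈ r → (a, β) ∈ s := by
  have h := X.cid1 rS sS tS
  rw [hnt, mul_one] at h
  -- h : X.c r s t = X.c t (convRel s) r * X.n r
  have hge : 1 ≤ X.c t (convRel s) r := by
    rcases Nat.eq_zero_or_pos (X.c t (convRel s) r) with h0 | h0
    · rw [h0, zero_mul] at h; exact absurd h hcrs
    · omega
  have hsub : Finset.univ.filter (fun γ => (π, γ) ∈ r ∧ (γ, β) ∈ s)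
      ⊆ Finset.univ.filter (fun γ => (π, γ) ∈ r) := by
    intro γ hγ
    simp only [Finset.mem_filter] at hγ ⊢
    exact ⟨hγ.1, hγ.2.1⟩
  have hc1 := X.cval rS sS tS hπβ
  have hc2 := X.slice_card rS π
  have hle : X.c r s t ≤ X.n r := by
    have := Finset.card_le_card hsub
    rwa [hc1, hc2] at this
  have hck : X.c r s t = X.n r := by
    have h2 : 1 * X.n r ≤ X.c t (convRel s) r * X.n r :=
      Nat.mul_le_mul_right (X.n r) hge
    omega
  have heq := Finset.eq_of_subset_of_card_le hsub (by rw [hc1, hc2, hck])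
  intro a ha
  have hmem : a ∈ Finset.univ.filter (fun γ => (π, γ) ∈ r) := by
    simp only [Finset.mem_filter, Finset.mem_univ, true_and]
    exact ha
  rw [← heq] at hmem
  exact (Finset.mem_filter.mp hmem).2.2

lemma thin_eq (X : AssocScheme Ω) {k : ℕ} {x y z r s t t' : BRel Ω}
    (xS : x ∈ X.S) (yS : y ∈ X.S) (zS : z ∈ X.S) (rS : r ∈ X.S) (sS : s ∈ X.S)
    (nx : X.n x = k) (ny : X.n y = k) (nz : X.n z = k)
    (F3 : X.c z (convRel r) x = 1) (F4 : X.c y (convRel s) z = 1)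
    (ht : t ∈ X.cp (convRel x) y ∩ X.cp r s) (ht' : t' ∈ X.cp (convRel x) y ∩ X.cp r s)
    (hnt : X.n t = 1) (hnt' : X.n t' = 1) : t = t' := by
  obtain ⟨ht1, ht2⟩ := Finset.mem_inter.mp ht
  obtain ⟨ht1', ht2'⟩ := Finset.mem_inter.mp ht'
  obtain ⟨tS, hcxyt⟩ := Finset.mem_filter.mp ht1
  obtain ⟨tS', hcxyt'⟩ := Finset.mem_filter.mp ht1'
  have hcrst : X.c r s t ≠ 0 := (Finset.mem_filter.mp ht2).2
  have hcrst' : X.c r s t' ≠ 0 := (Finset.mem_filter.mp ht2').2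
  obtain ⟨⟨π, β⟩, hπβ⟩ := X.nonempty t tS
  obtain ⟨β', hβ'⟩ := X.exists_succ tS' (X.n_pos tS') π
  -- pick e with (e, π) ∈ x
  obtain ⟨e, he⟩ := X.exists_succ (X.conv_mem x xS) (X.n_pos (X.conv_mem x xS)) π
  have hex : (e, π) ∈ x := mem_convRel.mp he
  -- a2 via F3 at pair (e, π) ∈ x
  obtain ⟨a2, ha21, ha22⟩ := X.exists_mid zS (X.conv_mem r rS) xS hex (by rw [F3]; omega)
  have hπa2 : (π, a2) ∈ r := mem_convRel.mp ha22
  have h1 := X.thin_all_r rS sS tS hnt hcrst hπβ a2 hπa2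
  have h1' := X.thin_all_r rS sS tS' hnt' hcrst' hβ' a2 hπa2
  have h2 := X.thin_all_x xS yS tS nx ny hnt hcxyt hπβ e hex
  have h2' := X.thin_all_x xS yS tS' nx ny hnt' hcxyt' hβ' e hex
  have hββ' : β = β' := X.unique_mid yS (X.conv_mem s sS) zS ha21 F4
    ⟨h2, mem_convRel.mpr h1⟩ ⟨h2', mem_convRel.mpr h1'⟩
  subst hββ'
  exact X.eq_of_mem_mem tS tS' hπβ hβ'

lemma cp_diag_right (X : AssocScheme Ω) {r : BRel Ω} (rS : r ∈ X.S) :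
    X.cp r (diagRel Ω) = {r} := by
  ext t
  simp only [cp, Finset.mem_filter, Finset.mem_singleton]
  constructor
  · rintro ⟨tS, hc⟩
    obtain ⟨⟨α, β⟩, hp⟩ := X.nonempty t tS
    obtain ⟨γ, h1, h2⟩ := X.exists_mid rS X.diag_mem tS hp hc
    have hγ : γ = β := mem_diagRel.mp h2
    subst hγ
    exact X.eq_of_mem_mem tS rS hp h1
  · rintro rfl
    refine ⟨rS, ?_⟩
    obtain ⟨⟨α, β⟩, hp⟩ := X.nonempty _ rS
    have h := X.c_ne_zero rS X.diag_mem hp (mem_diagRel.mpr rfl) (X.mem_rel α β)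
    rwa [← X.eq_rel rS hp] at h

lemma cp_diag_left (X : AssocScheme Ω) {s : BRel Ω} (sS : s ∈ X.S) :
    X.cp (diagRel Ω) s = {s} := by
  ext t
  simp only [cp, Finset.mem_filter, Finset.mem_singleton]
  constructor
  · rintro ⟨tS, hc⟩
    obtain ⟨⟨α, β⟩, hp⟩ := X.nonempty t tS
    obtain ⟨γ, h1, h2⟩ := X.exists_mid X.diag_mem sS tS hp hc
    have hγ : α = γ := mem_diagRel.mp h1
    subst hγ
    exact X.eq_of_mem_mem tS sS hp h2
  · rintro rfl
    refine ⟨sS, ?_⟩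
    obtain ⟨⟨α, β⟩, hp⟩ := X.nonempty _ sS
    have h := X.c_ne_zero X.diag_mem sS (mem_diagRel.mpr rfl) hp (X.mem_rel α β)
    rwa [← X.eq_rel sS hp] at h

lemma key (X : AssocScheme Ω) (k : ℕ) (hk : 1 < k)
    (hval : ∀ s ∈ X.S, X.n s = 1 ∨ X.n s = k)
    {x y z r s : BRel Ω}
    (hx : x ∈ X.Sk k) (hy : y ∈ X.Sk k) (hz : z ∈ X.Sk k)
    (hxz : X.adj x z) (hzy : X.adj z y)
    (hr : r ∈ X.cp (convRel x) z) (hs : s ∈ X.cp (convRel z) y)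
    (hcond : X.cpS (X.cp x (convRel x)) (X.cp y (convRel y)) ∩ X.cp z (convRel z)
      = {diagRel Ω}) :
    ∃ t₀, t₀ ∈ X.cp r s ∧ X.cp (convRel x) y ∩ X.cp r s = {t₀} := by
  classical
  obtain ⟨xS, nx⟩ := Finset.mem_filter.mp hx
  obtain ⟨yS, ny⟩ := Finset.mem_filter.mp hy
  obtain ⟨zS, nz⟩ := Finset.mem_filter.mp hz
  obtain ⟨rS, hcr⟩ := Finset.mem_filter.mp hr
  obtain ⟨sS, hcs⟩ := Finset.mem_filter.mp hs
  have xcS := X.conv_mem x xS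
  have ycS := X.conv_mem y yS
  have zcS := X.conv_mem z zS
  have scS := X.conv_mem s sS
  have F1 : X.c x r z = 1 := hxz r hr
  have F2 : X.c z s y = 1 := hzy s hs
  have F4 : X.c y (convRel s) z = 1 := by
    have h := X.cid1 zS sS yS
    rw [F2, ny, nz] at h
    exact (Nat.eq_of_mul_eq_mul_right (by omega) h).symm
  have hmidxr : ∀ e a, (e, a) ∈ z → ∃ p, (e, p) ∈ x ∧ (p, a) ∈ r := fun e a h =>
    X.exists_mid xS rS zS h (by rw [F1]; omega)
  have hmidys : ∀ e a, (e, a) ∈ z → ∃ c, (e, c) ∈ y ∧ (a, c) ∈ s := by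
    intro e a h
    obtain ⟨c, h1, h2⟩ := X.exists_mid yS scS zS h (by rw [F4]; omega)
    exact ⟨c, h1, mem_convRel.mp h2⟩
  set I := X.cp (convRel x) y ∩ X.cp r s with hIdef
  have memS : ∀ t ∈ I, t ∈ X.S := fun t ht =>
    (Finset.mem_filter.mp (Finset.mem_inter.mp ht).1).1
  -- surjectivity of the z-configuration map onto pairs of members of I
  have hsur : ∀ t ∈ I, ∀ p₁ c₁ : Ω, (p₁, c₁) ∈ t →
      ∃ e a, (e, a) ∈ z ∧ (e, p₁) ∈ x ∧ (p₁, a) ∈ r ∧ (e, c₁) ∈ y ∧ (a, c₁) ∈ s := by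
    intro t ht p₁ c₁ hp
    obtain ⟨ht1, ht2⟩ := Finset.mem_inter.mp ht
    obtain ⟨tS, hcxy⟩ := Finset.mem_filter.mp ht1
    have hcrs : X.c r s t ≠ 0 := (Finset.mem_filter.mp ht2).2
    obtain ⟨e, he1, he2⟩ := X.exists_mid xcS yS tS hp hcxy
    have hex : (e, p₁) ∈ x := mem_convRel.mp he1
    obtain ⟨a, ha1, ha2⟩ := X.exists_mid rS sS tS hp hcrs
    obtain ⟨e₁, he₁1, he₁2⟩ := X.exists_mid xcS zS rS ha1 hcr
    have he₁x : (e₁, p₁) ∈ x := mem_convRel.mp he₁1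
    obtain ⟨e₂, he₂1, he₂2⟩ := X.exists_mid zcS yS sS ha2 hcs
    have he₂z : (e₂, a) ∈ z := mem_convRel.mp he₂1
    have hm1 : X.rel e₁ e₂ ∈ X.cp z (convRel z) :=
      X.mem_cp_of_triangle zS zcS he₁2 (mem_convRel.mpr he₂z)
    have hu1 : X.rel e₁ e ∈ X.cp x (convRel x) :=
      X.mem_cp_of_triangle xS xcS he₁x (mem_convRel.mpr hex)
    have hu2 : X.rel e e₂ ∈ X.cp y (convRel y) :=
      X.mem_cp_of_triangle yS ycS he2 (mem_convRel.mpr he₂2)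
    have hm2 : X.rel e₁ e₂ ∈ X.cp (X.rel e₁ e) (X.rel e e₂) :=
      X.mem_cp_of_triangle (X.rel_mem_S e₁ e) (X.rel_mem_S e e₂) (X.mem_rel e₁ e)
        (X.mem_rel e e₂)
    have hmS : X.rel e₁ e₂ ∈ X.cpS (X.cp x (convRel x)) (X.cp y (convRel y)) := by
      simp only [cpS, Finset.mem_biUnion]
      exact ⟨_, hu1, _, hu2, hm2⟩
    have hmem : X.rel e₁ e₂ ∈ ({diagRel Ω} : Finset (BRel Ω)) := by
      rw [← hcond]; exact Finset.mem_inter.mpr ⟨hmS, hm1⟩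
    have hdiag : X.rel e₁ e₂ = diagRel Ω := Finset.mem_singleton.mp hmem
    have hee : e₁ = e₂ := by
      have h := X.mem_rel e₁ e₂; rw [hdiag] at h; exact mem_diagRel.mp h
    subst hee
    exact ⟨e₁, a, he₁2, he₁x, ha1, he₂2, ha2⟩
  -- choice function from z-pairs to (p, c)-pairs
  have hex' : ∀ ea : Ω × Ω, ∃ pc : Ω × Ω, ea ∈ z →
      (ea.1, pc.1) ∈ x ∧ (pc.1, ea.2) ∈ r ∧ (ea.1, pc.2) ∈ y ∧ (ea.2, pc.2) ∈ s := by
    rintro ⟨e, a⟩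
    by_cases h : (e, a) ∈ z
    · obtain ⟨p, hp1, hp2⟩ := hmidxr e a h
      obtain ⟨c, hc1, hc2⟩ := hmidys e a h
      exact ⟨(p, c), fun _ => ⟨hp1, hp2, hc1, hc2⟩⟩
    · exact ⟨(e, a), fun h' => absurd h' h⟩
  choose ζ hζ using hex'
  have hζuniq : ∀ ea ∈ z, ∀ pc : Ω × Ω,
      ((ea.1, pc.1) ∈ x ∧ (pc.1, ea.2) ∈ r ∧ (ea.1, pc.2) ∈ y ∧ (ea.2, pc.2) ∈ s) →
      ζ ea = pc := by
    intro ea hea pc hpc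
    obtain ⟨h1, h2, h3, h4⟩ := hζ ea hea
    have heaz : (ea.1, ea.2) ∈ z := by simpa using hea
    have hp : (ζ ea).1 = pc.1 :=
      X.unique_mid xS rS zS heaz F1 ⟨h1, h2⟩ ⟨hpc.1, hpc.2.1⟩
    have hc : (ζ ea).2 = pc.2 :=
      X.unique_mid yS scS zS heaz F4 ⟨h3, mem_convRel.mpr h4⟩
        ⟨hpc.2.2.1, mem_convRel.mpr hpc.2.2.2⟩
    exact Prod.ext hp hc
  have hUsub : Set.SurjOn ζ ↑z ↑(I.biUnion id) := by
    intro pc hpc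
    obtain ⟨t, htI, hpt⟩ := Finset.mem_biUnion.mp (Finset.mem_coe.mp hpc)
    obtain ⟨e, a, h0, h1, h2, h3, h4⟩ := hsur t htI pc.1 pc.2 (by simpa using hpt)
    exact ⟨(e, a), h0, hζuniq (e, a) h0 pc ⟨h1, h2, h3, h4⟩⟩
  have hcard1 : (I.biUnion id).card ≤ z.card := Finset.card_le_card_of_surjOn ζ hUsub
  have hdisj : ∀ t ∈ I, ∀ t' ∈ I, t ≠ t' → Disjoint (id t) (id t') := by
    intro t ht t' ht' hne
    rw [Finset.disjoint_left]
    intro p hp hp'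
    exact hne (X.eq_of_mem_mem (memS t ht) (memS t' ht')
      (show (p.1, p.2) ∈ t by simpa using hp) (show (p.1, p.2) ∈ t' by simpa using hp'))
  have hcard2 : (I.biUnion id).card = ∑ t ∈ I, t.card := Finset.card_biUnion hdisj
  have hsum : ∑ t ∈ I, X.n t ≤ k := by
    have h1 : Fintype.card Ω * ∑ t ∈ I, X.n t ≤ Fintype.card Ω * k := by
      rw [Finset.mul_sum]
      calc ∑ t ∈ I, (Fintype.card Ω * X.n t) = ∑ t ∈ I, t.card :=
            Finset.sum_congr rfl (fun t ht => (X.card_rel (memS t ht)).symm)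
      _ = (I.biUnion id).card := hcard2.symm
      _ ≤ z.card := hcard1
      _ = Fintype.card Ω * k := by rw [X.card_rel zS, nz]
    exact Nat.le_of_mul_le_mul_left h1 X.cardΩ_pos
  -- F3 for thin_eq
  have F3 : X.c z (convRel r) x = 1 := by
    have h := X.cid1 xS rS zS
    rw [F1, nz, nx] at h
    exact (Nat.eq_of_mul_eq_mul_right (by omega) h).symm
  -- existence
  obtain ⟨⟨e₀, a₀⟩, hea₀⟩ := X.nonempty z zS
  obtain ⟨p₀, hp₀1, hp₀2⟩ := hmidxr e₀ a₀ hea₀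
  obtain ⟨c₀, hc₀1, hc₀2⟩ := hmidys e₀ a₀ hea₀
  have ht₀1 : X.rel p₀ c₀ ∈ X.cp (convRel x) y :=
    X.mem_cp_of_triangle xcS yS (mem_convRel.mpr hp₀1) hc₀1
  have ht₀2 : X.rel p₀ c₀ ∈ X.cp r s := X.mem_cp_of_triangle rS sS hp₀2 hc₀2
  have ht₀ : X.rel p₀ c₀ ∈ I := Finset.mem_inter.mpr ⟨ht₀1, ht₀2⟩
  -- uniqueness
  have huniq : ∀ t ∈ I, ∀ t' ∈ I, t = t' := by
    intro t ht t' ht'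
    by_cases hne : t = t'
    · exact hne
    · exfalso
      have hsub : ({t, t'} : Finset (BRel Ω)) ⊆ I := by
        intro u hu
        rcases Finset.mem_insert.mp hu with h | h
        · exact h ▸ ht
        · exact (Finset.mem_singleton.mp h) ▸ ht'
      have hpair : X.n t + X.n t' ≤ ∑ u ∈ I, X.n u := by
        rw [← Finset.sum_pair hne]
        exact Finset.sum_le_sum_of_subset hsub
      have htpos := X.n_pos (memS t ht)
      have htpos' := X.n_pos (memS t' ht')
      have hnt : X.n t = 1 := by
        rcases hval t (memS t ht) with h | h
        · exact h
        · omega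
      have hnt' : X.n t' = 1 := by
        rcases hval t' (memS t' ht') with h | h
        · exact h
        · omega
      exact hne (X.thin_eq xS yS zS rS sS nx ny nz F3 F4 ht ht' hnt hnt')
  exact ⟨X.rel p₀ c₀, ht₀2,
    Finset.eq_singleton_iff_unique_mem.mpr ⟨ht₀, fun t ht => huniq t ht _ ht₀⟩⟩

end AssocScheme

end Main


theorem linked_of_loop (X : AssocScheme Ω) (k : ℕ) (hk : 1 < k)
    (hval : ∀ s ∈ X.S, X.n s = 1 ∨ X.n s = k)
    (x : BRel Ω) (hx : x ∈ X.Sk k) (y : BRel Ω) (hy : y ∈ X.Sk k) (z : BRel Ω) (hz : z ∈ X.Sk k)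
    (hxz : X.adj x z) (hzy : X.adj z y)
    (r : BRel Ω) (hr : r ∈ X.cp (convRel x) z) (s : BRel Ω) (hs : s ∈ X.cp (convRel z) y)
    (hloop : X.adj z z)
    (hcond : X.cpS (X.cp x (convRel x)) (X.cp y (convRel y)) ∩ X.cp z (convRel z) = {diagRel Ω}) :
    ∃ t, X.linked k x y z r s t := by
  obtain ⟨xS, nx⟩ := Finset.mem_filter.mp hx
  obtain ⟨yS, ny⟩ := Finset.mem_filter.mp hy
  obtain ⟨zS, nz⟩ := Finset.mem_filter.mp hz
  obtain ⟨rS, hcr⟩ := Finset.mem_filter.mp hr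
  obtain ⟨sS, hcs⟩ := Finset.mem_filter.mp hs
  -- adjacency of z to x
  have hzx : X.adj z x := by
    intro u hu
    obtain ⟨uS, hcu⟩ := Finset.mem_filter.mp hu
    have hco : X.c (convRel x) z (convRel u) ≠ 0 := by
      have h := X.cid2 (X.conv_mem z zS) xS uS
      rw [convRel_convRel] at h
      rwa [← h]
    have hu' : convRel u ∈ X.cp (convRel x) z :=
      Finset.mem_filter.mpr ⟨X.conv_mem u uS, hco⟩
    have h1 : X.c x (convRel u) z = 1 := hxz _ hu'
    have h := X.cid1 xS (X.conv_mem u uS) zS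
    rw [convRel_convRel, h1, nz, nx] at h
    exact (Nat.eq_of_mul_eq_mul_right (by omega) h).symm
  obtain ⟨t₀, ht₀rs, hkey⟩ := X.key k hk hval hx hy hz hxz hzy hr hs hcond
  have hv : convRel s ∈ X.cp (convRel y) z := by
    have h := X.cid2 (X.conv_mem z zS) yS sS
    rw [convRel_convRel] at h
    exact Finset.mem_filter.mpr ⟨X.conv_mem s sS, by rwa [← h]⟩
  have hw : diagRel Ω ∈ X.cp (convRel z) z := by
    refine Finset.mem_filter.mpr ⟨X.diag_mem, ?_⟩
    have h := X.n_pos (X.conv_mem z zS)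
    rw [show X.n (convRel z)
      = X.c (convRel z) (convRel (convRel z)) (diagRel Ω) from rfl, convRel_convRel] at h
    omega
  refine ⟨t₀, z, Finset.mem_filter.mpr ⟨zS, nz⟩, hzx, hzy, hloop,
    r, hr, convRel s, hv, diagRel Ω, hw, ht₀rs, ?_, ?_, ?_⟩
  · rw [convRel_diag, X.cp_diag_right rS]
    exact Finset.inter_singleton_of_mem hr
  · rw [convRel_convRel, X.cp_diag_left sS]
    exact Finset.inter_singleton_of_mem hs
  · rw [convRel_convRel]
    exact hkey
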